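/- Let p be a prime and G a finite abelian p-group isomorphic to Z_{p^{e_1}} ⊕ ... ⊕ Z_{p^{e_l}} with exponent p^{e_l}. Let A be a nonempty subset of {1,...,p^{e_l}} whose elements are pairwise incongruent modulo p and nonzero modulo p, with |A| = r. Then for any integer k ≥ (1 + Σ_{i=1}^l (p^{e_i} - 1))/r and any sequence g_1,...,g_k in G, there exist indices 1 ≤ i_1 < ... < i_m ≤ k with m ≥ 1 and coefficients a_1,...,a_m ∈ A such that Σ_{j=1}^m a_j · g_{i_j} = 0 in G. -/

import Mathlib

open Finset Polynomial

lemma aux_nilpotent {R : Type*} [CommRing R] {l : ℕ} (S : Fin l → R) (c : Fin l → ℕ)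
    (hS : ∀ i, S i ^ c i = 0) (n : ℕ) (hn : 1 + ∑ i, (c i - 1) ≤ n) :
    Ideal.span (Set.range S) ^ n = ⊥ := by
  rw [Ideal.span, Submodule.span_pow, Submodule.span_eq_bot]
  intro x hx
  obtain ⟨f, hf⟩ := Set.mem_pow.mp hx
  rw [List.prod_ofFn] at hf
  choose ι hι using fun j => (f j).2
  have hx' : x = ∏ j, S (ι j) := by rw [← hf]; exact (Finset.prod_congr rfl fun j _ => (hι j)).symm
  have hpig : ∃ i, c i ≤ (Finset.univ.filter fun j => ι j = i).card := by
    by_contra h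
    push_neg at h
    have h1 : (Finset.univ : Finset (Fin n)).card
        = ∑ i, (Finset.univ.filter fun j => ι j = i).card :=
      Finset.card_eq_sum_card_fiberwise (fun x _ => Finset.mem_univ _)
    have h2 : ∑ i, (Finset.univ.filter fun j => ι j = i).card ≤ ∑ i, (c i - 1) :=
      Finset.sum_le_sum fun i _ => Nat.le_sub_one_of_lt (h i)
    have h4 : (Finset.univ : Finset (Fin n)).card = n := Finset.card_fin n
    omega
  obtain ⟨i0, hi0⟩ := hpig
  rw [hx', ← Finset.prod_filter_mul_prod_filter_not Finset.univ (fun j => ι j = i0)]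
  have h3 : ∏ j ∈ Finset.univ.filter fun j => ι j = i0, S (ι j) = 0 := by
    rw [Finset.prod_congr rfl (fun j hj => by rw [(Finset.mem_filter.mp hj).2]),
      Finset.prod_const]
    obtain ⟨d, hd⟩ := Nat.exists_eq_add_of_le hi0
    rw [hd, pow_add, hS i0, zero_mul]
  rw [h3, zero_mul]

lemma aux_lagrange (p : ℕ) [Fact p.Prime] (A : Finset ℕ) (hA : A.Nonempty)
    (hAdist : ∀ a ∈ A, ∀ b ∈ A, a ≡ b [MOD p] → a = b) :
    ∃ lam : ℕ → ZMod p, (∑ a ∈ A, lam a = 1) ∧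
      ∀ m, 1 ≤ m → m < A.card → ∑ a ∈ A, lam a * (a.choose m : ZMod p) = 0 := by
  set v : ℕ → ZMod p := fun a => (a : ZMod p) with hv_def
  have hv : Set.InjOn v A := by
    intro a ha b hb hab
    exact hAdist a ha b hb ((ZMod.natCast_eq_natCast_iff a b p).mp hab)
  set lam : ℕ → ZMod p := fun a => (Lagrange.basis A v a).eval 0 with hlam_def
  have key : ∀ f : (ZMod p)[X], f.degree < A.card →
      ∑ a ∈ A, f.eval (v a) * lam a = f.eval 0 := by
    intro f hf
    conv_rhs => rw [Lagrange.eq_interpolate hv hf]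
    rw [Lagrange.interpolate_apply, Polynomial.eval_finset_sum]
    exact Finset.sum_congr rfl fun a _ => by rw [Polynomial.eval_mul, Polynomial.eval_C]
  have hcard_pos : 0 < A.card := hA.card_pos
  refine ⟨lam, ?_, ?_⟩
  · have h1 := key 1 (by simpa using (by exact_mod_cast hcard_pos : (0 : WithBot ℕ) < A.card))
    simpa using h1
  · intro m hm1 hmr
    have hmp : m < p := by
      have : A.card ≤ p := by
        have h := Finset.card_le_card_of_injOn v (fun a _ => Finset.mem_univ (v a)) hv
        simpa [ZMod.card] using h
      omega
    have hfact : ((m.factorial : ZMod p)) ≠ 0 := by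
      rw [Ne, ZMod.natCast_eq_zero_iff]
      intro hdvd
      exact absurd ((Nat.Prime.dvd_factorial (Fact.out)).mp hdvd) (by omega)
    set f : (ZMod p)[X] := C ((m.factorial : ZMod p))⁻¹ * ∏ i ∈ range m, (X - C (i : ZMod p))
      with hf_def
    have hdeg : f.degree < A.card := by
      have h1 : f.natDegree ≤ m := by
        refine le_trans (natDegree_mul_le) ?_
        simp only [natDegree_C, zero_add]
        refine le_trans (natDegree_prod_le _ _) ?_
        refine le_trans (Finset.sum_le_sum fun i _ => le_of_eq (natDegree_X_sub_C _)) ?_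
        simp
      calc f.degree ≤ f.natDegree := degree_le_natDegree
        _ < A.card := by exact_mod_cast lt_of_le_of_lt h1 hmr
    have heval : ∀ a ∈ A, f.eval (v a) = (a.choose m : ZMod p) := by
      intro a _
      have hprod : ∏ i ∈ range m, ((a : ZMod p) - (i : ZMod p))
          = (a.descFactorial m : ZMod p) := by
        rcases le_or_gt m a with h | h
        · rw [Nat.descFactorial_eq_prod_range, Nat.cast_prod]
          exact Finset.prod_congr rfl fun i hi => by
            rw [Nat.cast_sub (le_of_lt (lt_of_lt_of_le (Finset.mem_range.mp hi) h))]
        · rw [Nat.descFactorial_eq_zero_iff_lt.mpr h, Nat.cast_zero]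
          exact Finset.prod_eq_zero (Finset.mem_range.mpr h) (by simp)
      rw [hf_def]
      simp only [eval_mul, eval_C, eval_prod, eval_sub, eval_X]
      rw [hprod, Nat.descFactorial_eq_factorial_mul_choose, Nat.cast_mul,
        inv_mul_cancel_left₀ hfact]
    have heval0 : f.eval 0 = 0 := by
      rw [hf_def]
      simp only [eval_mul, eval_C, eval_prod, eval_sub, eval_X]
      rw [Finset.prod_eq_zero (Finset.mem_range.mpr hm1) (by simp), mul_zero]
    have h2 := key f hdeg
    rw [heval0, Finset.sum_congr rfl (fun a ha => by rw [heval a ha])] at h2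
    rw [← h2]
    exact Finset.sum_congr rfl fun a _ => mul_comm _ _

/-- A sequence `g` admits a nonempty subsequence with a zero linear combination
with coefficients drawn from `A` (with repetition allowed). -/
def hasZeroComb {G : Type*} [AddCommGroup G] (A : Finset ℕ) {k : ℕ} (g : Fin k → G) : Prop :=
  ∃ s : Finset (Fin k), s.Nonempty ∧ ∃ a : Fin k → ℕ,
    (∀ i ∈ s, a i ∈ A) ∧ ∑ i ∈ s, a i • g i = 0

theorem stmt0 {p l : ℕ} (hp : p.Prime) (hl : 0 < l) (e : Fin l → ℕ)
    (he : ∀ i, 1 ≤ e i) (hmono : Monotone e)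
    {G : Type*} [AddCommGroup G] (φ : G ≃+ ∀ i : Fin l, ZMod (p ^ e i))
    (A : Finset ℕ) (hA : A.Nonempty)
    (hAsub : A ⊆ Finset.Icc 1 (p ^ e ⟨l - 1, by omega⟩))
    (hAnz : ∀ a ∈ A, ¬ p ∣ a)
    (hAdist : ∀ a ∈ A, ∀ b ∈ A, a ≡ b [MOD p] → a = b)
    (k : ℕ) (hk : 1 + ∑ i, (p ^ e i - 1) ≤ k * A.card)
    (g : Fin k → G) : hasZeroComb A g := by
  classical
  by_contra hcon
  haveI : Fact p.Prime := ⟨hp⟩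
  haveI hNZ : ∀ i : Fin l, NeZero (p ^ e i) := fun i => ⟨pow_ne_zero _ hp.pos.ne'⟩
  set r := A.card with hr
  set N := p ^ e ⟨l - 1, by omega⟩ with hN
  obtain ⟨lam, hlam0, hlamm⟩ := aux_lagrange p A hA hAdist
  haveI : CharP (AddMonoidAlgebra (ZMod p) G) p := by
    refine charP_of_injective_algebraMap (R := ZMod p) (A := AddMonoidAlgebra (ZMod p) G) ?_ p
    rw [show ⇑(algebraMap (ZMod p) (AddMonoidAlgebra (ZMod p) G)) = AddMonoidAlgebra.single (0 : G) from ?_]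
    · exact fun x y h => AddMonoidAlgebra.single_right_inj.mp h
    · rw [AddMonoidAlgebra.coe_algebraMap]
      funext x
      simp
  set ε : G → AddMonoidAlgebra (ZMod p) G := fun h => AddMonoidAlgebra.single h (1 : ZMod p) with hε
  set δ : Fin l → G := fun i => φ.symm (Pi.single i 1) with hδ
  set gen : Fin l → AddMonoidAlgebra (ZMod p) G := fun i => ε (δ i) - 1 with hgen
  set J : Ideal (AddMonoidAlgebra (ZMod p) G) := Ideal.span (Set.range gen) with hJ
  -- step 1
  have hgenpow : ∀ i, gen i ^ (p ^ e i) = 0 := by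
    intro i
    have hδ0 : (p ^ e i) • δ i = 0 := by
      have h1 : φ ((p ^ e i) • δ i) = 0 := by
        rw [map_nsmul, hδ]
        simp only [AddEquiv.apply_symm_apply]
        funext j
        by_cases hji : j = i
        · subst hji
          simp only [Pi.smul_apply, Pi.single_eq_same, Pi.zero_apply]
          rw [nsmul_eq_mul, mul_one, ZMod.natCast_self]
        · simp only [Pi.smul_apply, Pi.single_eq_of_ne hji, Pi.zero_apply, smul_zero]
      simpa using (AddEquiv.map_eq_zero_iff φ).mp h1
    rw [hgen]
    simp only []
    rw [sub_pow_char_pow, one_pow, hε]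
    simp only []
    rw [AddMonoidAlgebra.single_pow, one_pow, hδ0, sub_eq_zero]
    exact AddMonoidAlgebra.one_def.symm
  -- step 2
  have hJnil : J ^ (k * r) = ⊥ := by
    refine aux_nilpotent gen (fun i => p ^ e i) hgenpow _ ?_
    exact le_trans hk (le_of_eq rfl)
  -- step 3
  have hmem : ∀ h : G, ε h - 1 ∈ J := by
    intro h
    have hrep : h = ∑ i, ((φ h i).val) • δ i := by
      apply φ.injective
      rw [map_sum]
      funext j
      rw [Finset.sum_apply]
      rw [Finset.sum_eq_single j]
      · rw [hδ]
        simp only [map_nsmul, AddEquiv.apply_symm_apply, Pi.smul_apply, Pi.single_eq_same]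
        rw [nsmul_eq_mul, mul_one, ZMod.natCast_zmod_val]
      · intro i _ hij
        rw [hδ]
        simp only [map_nsmul, AddEquiv.apply_symm_apply, Pi.smul_apply]
        rw [Pi.single_eq_of_ne (Ne.symm hij), smul_zero]
      · intro hj
        exact absurd (Finset.mem_univ j) hj
    have hfac : ε h = ∏ i, (ε (δ i)) ^ ((φ h i).val) := by
      rw [hε]
      have h2 : ∀ i : Fin l, (AddMonoidAlgebra.single (δ i) (1 : ZMod p)) ^ (φ h i).val
          = AddMonoidAlgebra.single ((φ h i).val • δ i) 1 := fun i => by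
        rw [AddMonoidAlgebra.single_pow, one_pow]
      rw [Finset.prod_congr rfl fun i _ => h2 i, AddMonoidAlgebra.prod_single,
        Finset.prod_const_one, ← hrep]
    have hq : ∀ i, Ideal.Quotient.mk J (ε (δ i)) = 1 := by
      intro i
      have h1 : gen i ∈ J := Ideal.subset_span ⟨i, rfl⟩
      rw [hgen] at h1
      have h2 := (Ideal.Quotient.eq (I := J)).mpr h1
      rwa [map_one] at h2
    refine (Ideal.Quotient.eq (I := J)).mp ?_
    rw [map_one, hfac, map_prod]
    simp only [map_pow, hq, one_pow, Finset.prod_const_one]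
  -- step 5
  set u : Fin k → AddMonoidAlgebra (ZMod p) G := fun j => ∑ a ∈ A, AddMonoidAlgebra.single (a • g j) (lam a) with hu
  have humem : ∀ j, u j - 1 ∈ J ^ r := by
    intro j
    set Y : AddMonoidAlgebra (ZMod p) G := ε (g j) - 1 with hYdef
    have hYJ : Y ∈ J := hmem (g j)
    have hεg : ε (g j) = Y + 1 := by rw [hYdef]; ring
    have hsingle : ∀ a : ℕ, AddMonoidAlgebra.single (a • g j) (lam a)
        = lam a • (ε (g j)) ^ a := by
      intro a
      rw [hε]
      simp only [AddMonoidAlgebra.single_pow, one_pow]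
      rw [AddMonoidAlgebra.smul_single', mul_one]
    have hpow : ∀ a ∈ A, (ε (g j)) ^ a
        = ∑ m ∈ Finset.range (N + 1), (a.choose m : ZMod p) • Y ^ m := by
      intro a haA
      have haN : a ≤ N := (Finset.mem_Icc.mp (hAsub haA)).2
      rw [hεg, add_pow]
      have h3 : ∀ m, Y ^ m * (1 : AddMonoidAlgebra (ZMod p) G) ^ (a - m)
          * (a.choose m : AddMonoidAlgebra (ZMod p) G)
          = (a.choose m : ZMod p) • Y ^ m := by
        intro m
        rw [one_pow, mul_one, Algebra.smul_def, map_natCast, mul_comm]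
      rw [Finset.sum_congr rfl fun m _ => h3 m]
      refine Finset.sum_subset (Finset.range_subset_range.mpr (by omega)) ?_
      intro m _ hm
      have hma : ¬ m < a + 1 := fun hlt => hm (Finset.mem_range.mpr hlt)
      rw [Nat.choose_eq_zero_of_lt (by omega), Nat.cast_zero, zero_smul]
    have huj : u j = ∑ m ∈ Finset.range (N + 1),
        (∑ a ∈ A, lam a * (a.choose m : ZMod p)) • Y ^ m := by
      rw [hu]
      simp only []
      rw [Finset.sum_congr rfl fun a haA => by rw [hsingle a, hpow a haA, Finset.smul_sum]]
      rw [Finset.sum_comm]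
      refine Finset.sum_congr rfl fun m _ => ?_
      rw [Finset.sum_smul]
      exact Finset.sum_congr rfl fun a _ => (smul_smul _ _ _)
    have hc0 : (∑ a ∈ A, lam a * ((a.choose 0 : ℕ) : ZMod p)) = 1 := by
      simp only [Nat.choose_zero_right, Nat.cast_one, mul_one]
      exact hlam0
    have hsplit : u j - 1 = ∑ m ∈ (Finset.range (N + 1)).erase 0,
        (∑ a ∈ A, lam a * (a.choose m : ZMod p)) • Y ^ m := by
      rw [huj, ← Finset.add_sum_erase _ _ (Finset.mem_range.mpr (Nat.succ_pos N))]
      rw [hc0, pow_zero, one_smul, add_sub_cancel_left]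
    rw [hsplit]
    refine Ideal.sum_mem _ fun m hm => ?_
    have hm0 : m ≠ 0 := Finset.ne_of_mem_erase hm
    rcases lt_or_ge m r with hmr | hrm
    · rw [hlamm m (by omega) (by rw [← hr]; exact hmr), zero_smul]
      exact Submodule.zero_mem _
    · have hY : Y ^ m ∈ J ^ r := by
        rw [show m = r + (m - r) by omega, pow_add]
        exact Ideal.mul_mem_right _ _ (Ideal.pow_mem_pow hYJ r)
      rw [Algebra.smul_def]
      exact Ideal.mul_mem_left _ _ hY
  -- step 6
  have hP : ∏ j, (u j - 1) = 0 := by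
    have h1 : ∏ j, (u j - 1) ∈ ∏ _j : Fin k, J ^ r :=
      Ideal.prod_mem_prod fun j _ => humem j
    rw [Finset.prod_const, Finset.card_univ, Fintype.card_fin, ← pow_mul, mul_comm r k,
      hJnil] at h1
    exact h1
  -- step 7
  have hneg : ∀ n : ℕ, (-1 : AddMonoidAlgebra (ZMod p) G) ^ n
      = AddMonoidAlgebra.single (0 : G) ((-1 : ZMod p) ^ n) := by
    intro n
    have h1 : (-1 : AddMonoidAlgebra (ZMod p) G) = AddMonoidAlgebra.single (0 : G) (-1) := by
      rw [AddMonoidAlgebra.one_def, ← AddMonoidAlgebra.single_neg]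
    rw [h1, AddMonoidAlgebra.single_pow, smul_zero]
  have hprodu : ∀ s : Finset (Fin k), ∏ j ∈ s, u j = ∑ c ∈ s.pi (fun _ => A),
      AddMonoidAlgebra.single (∑ x ∈ s.attach, (c x.1 x.2) • g x.1)
        (∏ x ∈ s.attach, lam (c x.1 x.2)) := by
    intro s
    rw [hu]
    simp only []
    rw [Finset.prod_sum]
    exact Finset.sum_congr rfl fun c hc => AddMonoidAlgebra.prod_single _ _ _
  have hexp : ∏ j, (u j - 1) = ∑ s ∈ (Finset.univ : Finset (Fin k)).powerset,
      (∏ j ∈ s, u j) * (-1 : AddMonoidAlgebra (ZMod p) G) ^ (k - s.card) := by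
    rw [Finset.prod_congr rfl (fun j _ => sub_eq_add_neg (u j) (1 : AddMonoidAlgebra (ZMod p) G))]
    rw [Finset.prod_add]
    refine Finset.sum_congr rfl fun s hs => ?_
    rw [Finset.prod_const, Finset.card_sdiff_of_subset (Finset.subset_univ s), Finset.card_univ,
      Fintype.card_fin]
  have hP0 : (∏ j, (u j - 1)).coeff 0 = (-1 : ZMod p) ^ k := by
    rw [hexp, AddMonoidAlgebra.coeff_sum, Finsupp.finset_sum_apply]
    rw [Finset.sum_eq_single ∅ ?_ ?_]
    · rw [Finset.prod_empty, one_mul, Finset.card_empty, Nat.sub_zero, hneg,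
        AddMonoidAlgebra.coeff_single, Finsupp.single_eq_same]
    · intro s hs hsne
      rw [hprodu, hneg, Finset.sum_mul,
        Finset.sum_congr rfl fun c _ => AddMonoidAlgebra.single_mul_single _ _ _ _,
        AddMonoidAlgebra.coeff_sum, Finsupp.finset_sum_apply,
        Finset.sum_congr rfl fun c _ => AddMonoidAlgebra.coeff_single_apply]
      refine Finset.sum_eq_zero fun c hc => if_neg ?_
      rw [add_zero]
      intro h0
      refine hcon ⟨s, Finset.nonempty_iff_ne_empty.mpr hsne,
        fun j => if hj : j ∈ s then c j hj else hA.choose, ?_, ?_⟩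
      · intro i hi
        simp only [dif_pos hi]
        exact Finset.mem_pi.mp hc i hi
      · calc ∑ i ∈ s, (if hj : i ∈ s then c i hj else hA.choose) • g i
            = ∑ x ∈ s.attach, (c x.1 x.2) • g x.1 := by
              rw [← Finset.sum_attach s (fun i => (if hj : i ∈ s then c i hj else hA.choose) • g i)]
              exact Finset.sum_congr rfl fun x _ => by rw [dif_pos x.2]
          _ = 0 := h0
    · intro hne
      exact absurd (Finset.empty_mem_powerset _) hne
  rw [hP] at hP0
  have : ((-1 : ZMod p)) ^ k ≠ 0 := pow_ne_zero _ (neg_ne_zero.mpr one_ne_zero)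
  exact this (by rw [← hP0]; rfl)
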